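/- Let m ≥ 1, let φ : (Fin m → ℝ) → ℝ be twice continuously differentiable (ContDiff ℝ 2), let b ∈ (Fin m → ℝ) and c ∈ ℝ, and define ψ(x) = φ(x) + c + Σ_i b_i x_i. Then at every point x, |∇ψ(x)|² Δψ(x) − |∇φ(x)|² Δφ(x) = Σ_μ ∂_μ ( y ↦ (2⟨b, ∇φ(y)⟩ + |b|²) ∂_μφ(y) − b_μ |∇φ(y)|² ) (x), i.e., the cubic Galileon density changes by an explicit total divergence under the Galilean shift. -/

import Mathlib

/-- Partial derivative of `f : (Fin m → ℝ) → ℝ` along the `i`-th standard coordinate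
direction, evaluated at `x`. -/
noncomputable def pd {m : ℕ} (i : Fin m) (f : (Fin m → ℝ) → ℝ) (x : Fin m → ℝ) : ℝ :=
  fderiv ℝ f x (Pi.single i 1)

open ContinuousLinearMap in
lemma hasFDerivAt_pd {m : ℕ} (φ : (Fin m → ℝ) → ℝ) (hφ : ContDiff ℝ 2 φ)
    (i : Fin m) (x : Fin m → ℝ) :
    HasFDerivAt (fun y => pd i φ y)
      ((apply ℝ ℝ (Pi.single i 1)).comp (fderiv ℝ (fderiv ℝ φ) x)) x := by
  have h1 : HasFDerivAt (fderiv ℝ φ) (fderiv ℝ (fderiv ℝ φ) x) x := by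
    have h := (hφ.fderiv_right (m := 1) (by norm_num)).differentiable (by norm_num)
    exact (h x).hasFDerivAt
  have := h1.clm_apply (hasFDerivAt_const (Pi.single i 1 : Fin m → ℝ) x)
  simp at this
  exact this

open ContinuousLinearMap in
lemma pd_shift {m : ℕ} (φ : (Fin m → ℝ) → ℝ) (hφ : ContDiff ℝ 2 φ)
    (b : Fin m → ℝ) (c : ℝ) (ψ : (Fin m → ℝ) → ℝ)
    (hψ : ∀ x, ψ x = φ x + c + ∑ i, b i * x i) (j : Fin m) (y : Fin m → ℝ) :
    pd j ψ y = pd j φ y + b j := by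
  have hL : HasFDerivAt (fun y : Fin m → ℝ => ∑ i, b i * y i)
      (∑ i, b i • (proj i : (Fin m → ℝ) →L[ℝ] ℝ)) y := by
    apply HasFDerivAt.fun_sum
    intro i _
    exact ((proj i : (Fin m → ℝ) →L[ℝ] ℝ).hasFDerivAt).const_mul (b i)
  have hφy := (hφ.differentiable (by norm_num) y).hasFDerivAt
  have hfun : ψ = fun z => φ z + c + ∑ i, b i * z i := funext hψ
  have h : HasFDerivAt ψ
      (fderiv ℝ φ y + ∑ i, b i • (proj i : (Fin m → ℝ) →L[ℝ] ℝ)) y := by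
    rw [hfun]
    exact (hφy.add_const c).add hL
  have := h.fderiv
  simp only [pd, this, ContinuousLinearMap.add_apply, ContinuousLinearMap.sum_apply,
    ContinuousLinearMap.smul_apply, proj_apply, Pi.single_apply, smul_eq_mul, mul_ite,
    mul_one, mul_zero]
  rw [Finset.sum_ite_eq' Finset.univ j b]
  simp

open ContinuousLinearMap

/-- For `φ : (Fin m → ℝ) → ℝ` twice continuously differentiable,
`b : Fin m → ℝ`, `c : ℝ`, and `ψ x = φ x + c + Σ_i b i * x i`, at every point `x`,
`|∇ψ x|² Δψ x − |∇φ x|² Δφ x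
   = Σ_μ ∂_μ (y ↦ (2⟨b, ∇φ y⟩ + |b|²) ∂_μφ y − b_μ |∇φ y|²) x`:
the cubic Galileon density changes by an explicit total divergence under the
Galilean shift. -/
theorem cubic_galileon_galilean_shift
    (m : ℕ) (hm : 1 ≤ m) (φ : (Fin m → ℝ) → ℝ) (hφ : ContDiff ℝ 2 φ)
    (b : Fin m → ℝ) (c : ℝ)
    (ψ : (Fin m → ℝ) → ℝ) (hψ : ∀ x, ψ x = φ x + c + ∑ i, b i * x i)
    (x : Fin m → ℝ) :
    (∑ i, (pd i ψ x) ^ 2) * (∑ i, pd i (fun y => pd i ψ y) x)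
        - (∑ i, (pd i φ x) ^ 2) * (∑ i, pd i (fun y => pd i φ y) x) =
      ∑ μ, pd μ (fun y =>
        (2 * (∑ i, b i * pd i φ y) + ∑ i, (b i) ^ 2) * pd μ φ y
          - b μ * ∑ i, (pd i φ y) ^ 2) x := by
  classical
  let D : Fin m → Fin m → ℝ :=
    fun μ i => fderiv ℝ (fderiv ℝ φ) x (Pi.single μ 1) (Pi.single i 1)
  let P : Fin m → ℝ := fun i => pd i φ x
  have hP' : ∀ i, pd i φ x = P i := fun _ => rfl
  have hD' : ∀ μ i, fderiv ℝ (fderiv ℝ φ) x (Pi.single μ 1) (Pi.single i 1) = D μ i :=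
    fun _ _ => rfl
  have hDsymm : ∀ μ i, D μ i = D i μ := fun μ i =>
    (hφ.contDiffAt.isSymmSndFDerivAt (by norm_num)) _ _
  have hpd2 : ∀ μ i : Fin m, pd μ (fun y => pd i φ y) x = D μ i := by
    intro μ i
    have h := (hasFDerivAt_pd φ hφ i x).fderiv
    show fderiv ℝ (fun y => pd i φ y) x (Pi.single μ 1) = D μ i
    rw [h]; rfl
  have hps : ∀ j, pd j ψ x = P j + b j := fun j => pd_shift φ hφ b c ψ hψ j x
  have hpd2ψ : ∀ i : Fin m, pd i (fun y => pd i ψ y) x = D i i := by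
    intro i
    have hfun : (fun y => pd i ψ y) = fun y => pd i φ y + b i :=
      funext fun y => pd_shift φ hφ b c ψ hψ i y
    rw [hfun]
    show fderiv ℝ (fun y => pd i φ y + b i) x (Pi.single i 1) = D i i
    rw [fderiv_add_const]
    exact hpd2 i i
  have hRterm : ∀ μ : Fin m, pd μ (fun y =>
      (2 * (∑ i, b i * pd i φ y) + ∑ i, (b i) ^ 2) * pd μ φ y
        - b μ * ∑ i, (pd i φ y) ^ 2) x
      = (2 * (∑ i, b i * P i) + ∑ i, (b i) ^ 2) * D μ μ
          + P μ * (2 * ∑ i, b i * D μ i)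
          - b μ * ∑ i, 2 * P i * D μ i := by
    intro μ
    have hpdi : ∀ i : Fin m, HasFDerivAt (fun y => pd i φ y)
        ((apply ℝ ℝ (Pi.single i 1)).comp (fderiv ℝ (fderiv ℝ φ) x)) x :=
      fun i => hasFDerivAt_pd φ hφ i x
    have hSd : HasFDerivAt (fun y => ∑ i, b i * pd i φ y)
        (∑ i, b i • ((apply ℝ ℝ (Pi.single i 1)).comp (fderiv ℝ (fderiv ℝ φ) x))) x :=
      HasFDerivAt.fun_sum fun i _ => (hpdi i).const_mul (b i)
    have hQd : HasFDerivAt (fun y => ∑ i, (pd i φ y) ^ 2)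
        (∑ i, (pd i φ x • ((apply ℝ ℝ (Pi.single i 1)).comp (fderiv ℝ (fderiv ℝ φ) x))
          + pd i φ x • ((apply ℝ ℝ (Pi.single i 1)).comp (fderiv ℝ (fderiv ℝ φ) x)))) x := by
      apply HasFDerivAt.fun_sum
      intro i _
      have h2 := (hpdi i).fun_mul (hpdi i)
      simpa [pow_two] using h2
    have hF := (((hSd.const_mul 2).add_const (∑ i, (b i) ^ 2)).mul (hpdi μ)).sub
      (hQd.const_mul (b μ))
    have hfe := hF.fderiv
    show fderiv ℝ _ x (Pi.single μ 1) = _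
    erw [hfe]
    simp only [ContinuousLinearMap.sub_apply, ContinuousLinearMap.add_apply,
      ContinuousLinearMap.smul_apply, ContinuousLinearMap.sum_apply,
      ContinuousLinearMap.comp_apply, apply_apply, smul_eq_mul, hD', hP']
    congr 2
    exact Finset.sum_congr rfl fun i _ => by ring
  have hcancel : ∑ μ, P μ * (2 * ∑ i, b i * D μ i) = ∑ μ, b μ * ∑ i, 2 * P i * D μ i := by
    simp only [Finset.mul_sum]
    rw [Finset.sum_comm]
    refine Finset.sum_congr rfl fun μ _ => Finset.sum_congr rfl fun i _ => ?_
    rw [hDsymm i μ]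
    ring
  simp only [hRterm, hpd2ψ, hps, hpd2, hP']
  rw [Finset.sum_sub_distrib, Finset.sum_add_distrib, hcancel, add_sub_cancel_right,
    ← Finset.mul_sum]
  have hsq : ∀ i, (P i + b i) ^ 2 = P i ^ 2 + (2 * (b i * P i) + b i ^ 2) := fun i => by ring
  rw [Finset.sum_congr rfl fun i _ => hsq i, Finset.sum_add_distrib, Finset.sum_add_distrib,
    ← Finset.mul_sum]
  ring
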